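/- For n ≥ 3, let L be the language of the DFA 𝒰_{{0},n}(a,b,c), which is 𝒰ₙ(a,b,c) with final state set changed to {0}. Then L* = L, hence (L*)ᴿ = Lᴿ, and the state complexity of (L*)ᴿ is exactly 2ⁿ. -/

import Mathlib

namespace SCPaper

/-- Reversal of a language. -/
def rev {α : Type} (L : Language α) : Language α := {w | w.reverse ∈ L}

/-- Union of two languages. -/
def lunion {α : Type} (K L : Language α) : Language α := {w | w ∈ K ∨ w ∈ L}

/-- Intersection of two languages. -/
def linter {α : Type} (K L : Language α) : Language α := {w | w ∈ K ∧ w ∈ L}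

/-- Difference of two languages. -/
def ldiff {α : Type} (K L : Language α) : Language α := {w | w ∈ K ∧ w ∉ L}

/-- Symmetric difference of two languages. -/
def lsymm {α : Type} (K L : Language α) : Language α := lunion (ldiff K L) (ldiff L K)

/-- Sizes (numbers of states) of complete DFAs recognizing `L`. -/
def complexitySet {α : Type} (L : Language α) : Set ℕ :=
  {n | ∃ M : DFA α (Fin n), M.accepts = L}

/-- A language is regular if it is recognized by some finite DFA. -/
def Regular {α : Type} (L : Language α) : Prop := (complexitySet L).Nonempty

/-- State complexity: the number of states of a minimal DFA for `L`. -/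
noncomputable def sc {α : Type} (L : Language α) : ℕ := sInf (complexitySet L)

/-- The cyclic permutation (0,1,…,n−1). -/
def cyc (n : ℕ) (i : Fin n) : Fin n :=
  ⟨(i.val + 1) % n, Nat.mod_lt _ (Nat.lt_of_le_of_lt (Nat.zero_le _) i.isLt)⟩

/-- The transposition (0,1). -/
def tp01 (n : ℕ) (i : Fin n) : Fin n :=
  if i.val = 0 then ⟨1 % n, Nat.mod_lt _ (Nat.lt_of_le_of_lt (Nat.zero_le _) i.isLt)⟩
  else if i.val = 1 then ⟨0, Nat.lt_of_le_of_lt (Nat.zero_le _) i.isLt⟩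
  else i

/-- The singular map sending n−1 to 0 and fixing everything else. -/
def sing (n : ℕ) (i : Fin n) : Fin n :=
  if i.val = n - 1 then ⟨0, Nat.lt_of_le_of_lt (Nat.zero_le _) i.isLt⟩ else i

/-- The transposition (n−2, n−1). -/
def tpTop (n : ℕ) (i : Fin n) : Fin n :=
  if i.val = n - 1 then ⟨n - 2, by have := i.isLt; omega⟩
  else if i.val = n - 2 then ⟨n - 1, by have := i.isLt; omega⟩
  else i

/-- The singular map sending n−1 to n−2 and fixing everything else. -/
def singTop (n : ℕ) (i : Fin n) : Fin n :=
  if i.val = n - 1 then ⟨n - 2, by have := i.isLt; omega⟩ else i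

/-- 𝒰ₙ(a,b,∅): binary alphabet, a = cycle (0,…,n−1), b = transposition (0,1),
initial state 0, final state n−1. -/
def U2dfa (n : ℕ) (h : 0 < n) : DFA (Fin 2) (Fin n) where
  step := fun i x => if x = 0 then cyc n i else tp01 n i
  start := ⟨0, h⟩
  accept := {i | i.val = n - 1}

def U2 (n : ℕ) (h : 0 < n) : Language (Fin 2) := (U2dfa n h).accepts

/-- 𝒰ₙ(a,b,c): a = cycle, b = transposition (0,1), c = (n−1 ↦ 0). -/
def Udfa (n : ℕ) (h : 0 < n) : DFA (Fin 3) (Fin n) where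
  step := fun i x => if x = 0 then cyc n i else if x = 1 then tp01 n i else sing n i
  start := ⟨0, h⟩
  accept := {i | i.val = n - 1}

def U (n : ℕ) (h : 0 < n) : Language (Fin 3) := (Udfa n h).accepts

/-- 𝒰ₙ(a,b,c) with final state set {0}. -/
def U0dfa (n : ℕ) (h : 0 < n) : DFA (Fin 3) (Fin n) where
  step := fun i x => if x = 0 then cyc n i else if x = 1 then tp01 n i else sing n i
  start := ⟨0, h⟩
  accept := {i | i.val = 0}

def U0 (n : ℕ) (h : 0 < n) : Language (Fin 3) := (U0dfa n h).accepts

/-- 𝒰ₙ(a,b,c,d): a = cycle, b = transposition (0,1), c = (n−1 ↦ 0), d = identity. -/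
def U4dfa (n : ℕ) (h : 0 < n) : DFA (Fin 4) (Fin n) where
  step := fun i x =>
    if x = 0 then cyc n i else if x = 1 then tp01 n i else if x = 2 then sing n i else i
  start := ⟨0, h⟩
  accept := {i | i.val = n - 1}

def U4 (n : ℕ) (h : 0 < n) : Language (Fin 4) := (U4dfa n h).accepts

/-- 𝒰ₙ(d,c,b,a): d = cycle, c = transposition (0,1), b = (n−1 ↦ 0), a = identity. -/
def U4dcbaDfa (n : ℕ) (h : 0 < n) : DFA (Fin 4) (Fin n) where
  step := fun i x =>
    if x = 3 then cyc n i else if x = 2 then tp01 n i else if x = 1 then sing n i else i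
  start := ⟨0, h⟩
  accept := {i | i.val = n - 1}

def U4dcba (n : ℕ) (h : 0 < n) : Language (Fin 4) := (U4dcbaDfa n h).accepts

/-- 𝒱ₙ(a,b,c,d): a = cycle, b = transposition (n−2,n−1), c = (n−1 ↦ n−2), d = identity. -/
def Vdfa (n : ℕ) (h : 0 < n) : DFA (Fin 4) (Fin n) where
  step := fun i x =>
    if x = 0 then cyc n i else if x = 1 then tpTop n i else if x = 2 then singTop n i else i
  start := ⟨0, h⟩
  accept := {i | i.val = n - 1}

def V (n : ℕ) (h : 0 < n) : Language (Fin 4) := (Vdfa n h).accepts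

/-- 𝒱ₙ(d,c,b,a): d = cycle, c = transposition (n−2,n−1), b = (n−1 ↦ n−2), a = identity. -/
def VdcbaDfa (n : ℕ) (h : 0 < n) : DFA (Fin 4) (Fin n) where
  step := fun i x =>
    if x = 3 then cyc n i else if x = 2 then tpTop n i else if x = 1 then singTop n i else i
  start := ⟨0, h⟩
  accept := {i | i.val = n - 1}

def Vdcba (n : ℕ) (h : 0 < n) : Language (Fin 4) := (VdcbaDfa n h).accepts

/-- Direct product of two DFAs with a chosen set of final states. -/
def prodDFA {α σ₁ σ₂ : Type} (M : DFA α σ₁) (N : DFA α σ₂) (acc : Set (σ₁ × σ₂)) :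
    DFA α (σ₁ × σ₂) where
  step := fun p x => (M.step p.1 x, N.step p.2 x)
  start := (M.start, N.start)
  accept := acc


/-- Chinese-remainder style pairing k ↦ (k mod m, k mod n). -/
def toPair (m n : ℕ) (hm : 0 < m) (hn : 0 < n) (k : Fin (m * n)) : Fin m × Fin n :=
  (⟨k.val % m, Nat.mod_lt _ hm⟩, ⟨k.val % n, Nat.mod_lt _ hn⟩)

/-- Componentwise successor on the product of two cyclic automata. -/
def prodSucc (m n : ℕ) (p : Fin m × Fin n) : Fin m × Fin n := (cyc m p.1, cyc n p.2)

/-- One-letter subset transition of the reversed NFA of 𝒰ₙ(a,b,c). -/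
def rstep (n : ℕ) (h : 0 < n) (S : Set (Fin n)) (x : Fin 3) : Set (Fin n) :=
  {q | (Udfa n h).step q x ∈ S}

/-- Action of a word on subsets in the reversed NFA of 𝒰ₙ(a,b,c). -/
def rword (n : ℕ) (h : 0 < n) (S : Set (Fin n)) (w : List (Fin 3)) : Set (Fin n) :=
  w.foldl (rstep n h) S

end SCPaper

open SCPaper

open SCPaper
namespace SCAux
open SCPaper

variable {α σ τ : Type}

/-- Reindex a DFA along an equivalence of state sets. -/
def reindex (M : DFA α σ) (e : σ ≃ τ) : DFA α τ where
  step := fun t x => e (M.step (e.symm t) x)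
  start := e M.start
  accept := {t | e.symm t ∈ M.accept}

lemma reindex_evalFrom (M : DFA α σ) (e : σ ≃ τ) (s : σ) (w : List α) :
    (reindex M e).evalFrom (e s) w = e (M.evalFrom s w) := by
  induction w generalizing s with
  | nil => rfl
  | cons x w ih =>
    show (reindex M e).evalFrom ((reindex M e).step (e s) x) w = _
    have : (reindex M e).step (e s) x = e (M.step s x) := by
      simp [reindex]
    rw [this, ih]
    rfl

lemma reindex_accepts (M : DFA α σ) (e : σ ≃ τ) :
    (reindex M e).accepts = M.accepts := by
  ext w
  have h1 : (reindex M e).evalFrom (e M.start) w = e (M.evalFrom M.start w) :=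
    reindex_evalFrom M e M.start w
  show (reindex M e).evalFrom (reindex M e).start w ∈ (reindex M e).accept ↔
      M.evalFrom M.start w ∈ M.accept
  show (reindex M e).evalFrom (e M.start) w ∈ (reindex M e).accept ↔ _
  rw [h1]
  show e.symm (e _) ∈ M.accept ↔ _
  rw [e.symm_apply_apply]

/-- positivity from `3 ≤ n` -/
lemma npos (n : ℕ) (hn : 3 ≤ n) : 0 < n := by omega

variable (n : ℕ) (hn : 3 ≤ n)

/-- the state 0 -/
def z0 : Fin n := ⟨0, npos n hn⟩

/-- the set {0} -/
def S0 : Set (Fin n) := {q | q.val = 0}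

lemma eval_eq : (U0dfa n (npos n hn)).evalFrom = (Udfa n (npos n hn)).evalFrom := rfl

lemma mem_U0 (w : List (Fin 3)) :
    w ∈ U0 n (npos n hn) ↔ ((Udfa n (npos n hn)).evalFrom (z0 n hn) w).val = 0 :=
  Iff.rfl

lemma rword_eq (w : List (Fin 3)) (S : Set (Fin n)) :
    rword n (npos n hn) S w = {q | (Udfa n (npos n hn)).evalFrom q w.reverse ∈ S} := by
  induction w generalizing S with
  | nil => ext q; simp [rword, DFA.evalFrom]
  | cons x w ih =>
    show rword n (npos n hn) (rstep n (npos n hn) S x) w = _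
    rw [ih]
    ext q
    simp only [Set.mem_setOf_eq, List.reverse_cons, DFA.evalFrom_append_singleton]
    rfl

lemma rword_append (w z : List (Fin 3)) (S : Set (Fin n)) :
    rword n (npos n hn) S (w ++ z) = rword n (npos n hn) (rword n (npos n hn) S w) z :=
  List.foldl_append ..

lemma mem_rev (w : List (Fin 3)) :
    w ∈ rev (U0 n (npos n hn)) ↔ z0 n hn ∈ rword n (npos n hn) (S0 n) w := by
  rw [rword_eq n hn]
  show w.reverse ∈ U0 n (npos n hn) ↔ _
  rw [mem_U0 n hn]
  simp only [Set.mem_setOf_eq, S0]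


lemma concat_mem (u v : List (Fin 3)) (hu : u ∈ U0 n (npos n hn)) (hv : v ∈ U0 n (npos n hn)) :
    u ++ v ∈ U0 n (npos n hn) := by
  rw [mem_U0 n hn] at *
  rw [DFA.evalFrom_of_append]
  have : (Udfa n (npos n hn)).evalFrom (z0 n hn) u = z0 n hn := by
    apply Fin.ext
    exact hu
  rw [this]
  exact hv

lemma kstar_U0 : KStar.kstar (U0 n (npos n hn)) = U0 n (npos n hn) := by
  apply le_antisymm
  · intro w hw
    replace hw := Language.mem_kstar.mp hw
    obtain ⟨L, rfl, hL⟩ := hw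
    induction L with
    | nil =>
      exact (mem_U0 n hn _).mpr rfl
    | cons u L ih =>
      rw [List.flatten_cons]
      exact concat_mem n hn _ _ (hL u (by simp)) (ih fun y hy => hL y (by simp [hy]))
  · exact le_kstar

/-- a word realizes a function on states -/
def Realizable (f : Fin n → Fin n) : Prop :=
  ∃ w : List (Fin 3), ∀ q, (Udfa n (npos n hn)).evalFrom q w = f q

lemma real_id : Realizable n hn id := ⟨[], fun _ => rfl⟩

lemma real_comp {f g : Fin n → Fin n} (hf : Realizable n hn f) (hg : Realizable n hn g) :
    Realizable n hn (g ∘ f) := by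
  obtain ⟨u, hu⟩ := hf
  obtain ⟨v, hv⟩ := hg
  exact ⟨u ++ v, fun q => by rw [DFA.evalFrom_of_append, hu, hv]; rfl⟩

lemma real_cyc : Realizable n hn (cyc n) :=
  ⟨[0], fun q => by simp [DFA.evalFrom, Udfa]⟩

lemma real_tp : Realizable n hn (tp01 n) :=
  ⟨[1], fun q => by simp [DFA.evalFrom, Udfa]⟩

lemma real_sing : Realizable n hn (sing n) :=
  ⟨[2], fun q => by simp [DFA.evalFrom, Udfa]⟩

lemma finRotate_eq_cyc (hn : 3 ≤ n) : ⇑(finRotate n) = cyc n := by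
  obtain ⟨m, rfl⟩ : ∃ m, n = m + 1 := ⟨n - 1, by omega⟩
  funext i
  rw [finRotate_succ_apply]
  apply Fin.ext
  have h1 : ((1 : Fin (m + 1)) : ℕ) = 1 := by
    have h2 : ((1 : Fin (m + 1)) : ℕ) = 1 % (m + 1) := rfl
    rw [h2, Nat.mod_eq_of_lt (by omega)]
  rw [Fin.add_def, h1]
  rfl

lemma swap_eq_tp01 : ⇑(Equiv.swap (⟨0, npos n hn⟩ : Fin n) ⟨1, by omega⟩) = tp01 n := by
  funext i
  rcases eq_or_ne i ⟨0, npos n hn⟩ with rfl | h0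
  · rw [Equiv.swap_apply_left]
    simp [tp01, Nat.mod_eq_of_lt (show 1 < n by omega)]
  · rcases eq_or_ne i ⟨1, by omega⟩ with rfl | h1
    · rw [Equiv.swap_apply_right]
      simp [tp01]
    · rw [Equiv.swap_apply_of_ne_of_ne h0 h1]
      have v0 : i.val ≠ 0 := fun h => h0 (Fin.ext h)
      have v1 : i.val ≠ 1 := fun h => h1 (Fin.ext h)
      simp [tp01, v0, v1]

lemma real_pow {f : Equiv.Perm (Fin n)} (hf : Realizable n hn ⇑f) (k : ℕ) :
    Realizable n hn ⇑(f ^ k) := by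
  induction k with
  | zero => simpa using real_id n hn
  | succ k ih =>
    have he : ⇑(f ^ (k + 1)) = ⇑f ∘ ⇑(f ^ k) := by
      funext q; rw [pow_succ']; rfl
    rw [he]; exact real_comp n hn ih hf

lemma real_perm (π : Equiv.Perm (Fin n)) : Realizable n hn ⇑π := by
  classical
  have h1 : (finRotate n).IsCycle := isCycle_finRotate_of_le (by omega)
  have h2 : (finRotate n).support = Finset.univ := support_finRotate_of_le (by omega)
  have hgen := Equiv.Perm.closure_cycle_adjacent_swap h1 h2 (⟨0, npos n hn⟩ : Fin n)
  have hπ : π ∈ Subgroup.closure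
      ({finRotate n, Equiv.swap (⟨0, npos n hn⟩ : Fin n) (finRotate n ⟨0, npos n hn⟩)} :
        Set (Equiv.Perm (Fin n))) := by
    rw [hgen]; trivial
  have hr1 : finRotate n ⟨0, npos n hn⟩ = (⟨1, by omega⟩ : Fin n) := by
    have h := congrFun (finRotate_eq_cyc n hn) ⟨0, npos n hn⟩
    rw [h]
    apply Fin.ext
    show (0 + 1) % n = 1
    rw [Nat.mod_eq_of_lt (by omega)]
  refine Subgroup.closure_induction ?_ ?_ ?_ ?_ hπ
  · intro x hx
    rcases hx with rfl | hx
    · rw [finRotate_eq_cyc n hn]; exact real_cyc n hn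
    · rw [Set.mem_singleton_iff] at hx
      subst hx
      rw [hr1, swap_eq_tp01 n hn]
      exact real_tp n hn
  · simpa using real_id n hn
  · intro x y _ _ hx hy
    have := real_comp n hn hy hx
    have he : ⇑(x * y) = ⇑x ∘ ⇑y := rfl
    rw [he]; exact this
  · intro x _ hx
    have h1 : orderOf x ≠ 0 := (orderOf_pos x).ne'
    have key : x ^ (orderOf x - 1) * x = 1 := by
      rw [← pow_succ, Nat.sub_add_cancel (by omega)]
      exact pow_orderOf_eq_one x
    have hord : x⁻¹ = x ^ (orderOf x - 1) := inv_eq_of_mul_eq_one_left key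
    rw [hord]
    exact real_pow n hn hx _



/-- reachable subsets in the reversed subset automaton -/
def Reach (S : Set (Fin n)) : Prop := ∃ w, rword n (npos n hn) (S0 n) w = S

lemma reach_S0 : Reach n hn (S0 n) := ⟨[], rfl⟩

lemma reach_perm {S : Set (Fin n)} (hS : Reach n hn S) (π : Equiv.Perm (Fin n)) :
    Reach n hn (⇑π ⁻¹' S) := by
  obtain ⟨w, hw⟩ := hS
  obtain ⟨u, hu⟩ := real_perm n hn π
  refine ⟨w ++ u.reverse, ?_⟩
  rw [rword_append n hn, hw, rword_eq n hn]
  ext q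
  simp only [Set.mem_setOf_eq, List.reverse_reverse, Set.mem_preimage]
  rw [hu]

lemma reach_step {S : Set (Fin n)} (hS : Reach n hn S) (x : Fin 3) :
    Reach n hn (rstep n (npos n hn) S x) := by
  obtain ⟨w, hw⟩ := hS
  exact ⟨w ++ [x], by rw [rword_append n hn, hw]; rfl⟩

/-- the set {0, 1, ..., k-1} -/
def Tk (k : ℕ) : Set (Fin n) := {q | q.val < k}

lemma rstep_c (S : Set (Fin n)) :
    rstep n (npos n hn) S 2 = {q | sing n q ∈ S} := by
  ext q
  show (if (2 : Fin 3) = 0 then cyc n q else if (2 : Fin 3) = 1 then tp01 n q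
      else sing n q) ∈ S ↔ _
  rw [if_neg (by decide), if_neg (by decide)]
  exact Iff.rfl

lemma rstep_a (S : Set (Fin n)) :
    rstep n (npos n hn) S 0 = {q | cyc n q ∈ S} := by
  ext q
  show (if (0 : Fin 3) = 0 then cyc n q else if (0 : Fin 3) = 1 then tp01 n q
      else sing n q) ∈ S ↔ _
  rw [if_pos rfl]
  exact Iff.rfl

lemma reach_Tk : ∀ k, k ≤ n → Reach n hn (Tk n k)
  | 0, _ => by
    have h1 : Reach n hn (rstep n (npos n hn) (S0 n) 0) := reach_step n hn (reach_S0 n hn) 0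
    have h2 := reach_step n hn h1 2
    rw [rstep_a n hn, rstep_c n hn] at h2
    convert h2 using 1
    ext q
    simp only [Tk, Set.mem_setOf_eq, S0]
    constructor
    · intro hq; exact absurd hq (by omega)
    · intro hq
      exfalso
      have hv : (cyc n (sing n q)).val = ((sing n q).val + 1) % n := rfl
      rw [hv] at hq
      have hlt : (sing n q).val < n := (sing n q).isLt
      have hne : (sing n q).val ≠ n - 1 := by
        show (if q.val = n - 1 then (⟨0, by omega⟩ : Fin n) else q).val ≠ n - 1
        by_cases hc : q.val = n - 1
        · rw [if_pos hc]; show (0 : ℕ) ≠ n - 1; omega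
        · rw [if_neg hc]; exact hc
      have : (sing n q).val + 1 < n := by omega
      rw [Nat.mod_eq_of_lt this] at hq
      omega
  | 1, _ => by
    have : Tk n 1 = S0 n := by
      ext q; simp only [Tk, S0, Set.mem_setOf_eq]; omega
    rw [this]; exact reach_S0 n hn
  | (k+2), hk => by
    have ih := reach_Tk (k+1) (by omega)
    have h2 := reach_step n hn ih 2
    rw [rstep_c n hn] at h2
    have hset : {q | sing n q ∈ Tk n (k+1)} = {q : Fin n | q.val < k + 1 ∨ q.val = n - 1} := by
      ext q
      simp only [Set.mem_setOf_eq, Tk, sing]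
      by_cases hc : q.val = n - 1 <;> simp [hc] <;> omega
    rw [hset] at h2
    have hperm := reach_perm n hn h2
      (Equiv.swap (⟨k+1, by omega⟩ : Fin n) ⟨n-1, by omega⟩)
    convert hperm using 1
    ext q
    rw [Set.mem_preimage]
    by_cases hq1 : q = (⟨k+1, by omega⟩ : Fin n)
    · subst hq1
      rw [Equiv.swap_apply_left]
      show k + 1 < k + 2 ↔ (n - 1 < k + 1 ∨ n - 1 = n - 1)
      omega
    · by_cases hq2 : q = (⟨n-1, by omega⟩ : Fin n)
      · subst hq2
        rw [Equiv.swap_apply_right]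
        have hne : n - 1 ≠ k + 1 := fun h => hq1 (Fin.ext h)
        show n - 1 < k + 2 ↔ (k + 1 < k + 1 ∨ k + 1 = n - 1)
        omega
      · rw [Equiv.swap_apply_of_ne_of_ne hq1 hq2]
        have hv1 : q.val ≠ k + 1 := fun h => hq1 (Fin.ext h)
        have hv2 : q.val ≠ n - 1 := fun h => hq2 (Fin.ext h)
        have := q.isLt
        show q.val < k + 2 ↔ (q.val < k + 1 ∨ q.val = n - 1)
        omega

/-- every subset of states is reachable -/
lemma reach_all (S : Set (Fin n)) : Reach n hn S := by
  classical
  let k := Fintype.card S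
  have hk : k ≤ n := by
    have := Fintype.card_subtype_le (p := fun q => q ∈ S)
    simpa [k] using this
  -- equivalence between S and Tk n k
  have hcardT : Fintype.card (Tk n k) = k := by
    have e : Tk n k ≃ Fin k :=
      { toFun := fun q => ⟨q.val.val, q.2⟩
        invFun := fun i => ⟨⟨i.val, lt_of_lt_of_le i.isLt hk⟩, i.isLt⟩
        left_inv := fun q => by ext; rfl
        right_inv := fun i => rfl }
    rw [Fintype.card_congr e, Fintype.card_fin]
  have e₁ : S ≃ Tk n k := by
    apply Fintype.equivOfCardEq
    rw [hcardT]
  have e₂ : {q : Fin n // ¬ q ∈ S} ≃ {q : Fin n // ¬ q ∈ Tk n k} := by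
    apply Fintype.equivOfCardEq
    rw [Fintype.card_subtype_compl, Fintype.card_subtype_compl, hcardT]
  let π : Equiv.Perm (Fin n) :=
    ((Equiv.sumCompl (· ∈ S)).symm.trans ((e₁.sumCongr e₂).trans
      (Equiv.sumCompl (· ∈ Tk n k))))
  have hπ : ∀ q, π q ∈ Tk n k ↔ q ∈ S := by
    intro q
    by_cases hq : q ∈ S
    · have : π q = (e₁ ⟨q, hq⟩).val := by
        simp only [π, Equiv.trans_apply, Equiv.sumCompl_symm_apply_of_pos hq]
        rfl
      rw [this]
      exact iff_of_true (e₁ ⟨q, hq⟩).2 hq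
    · have : π q = (e₂ ⟨q, hq⟩).val := by
        simp only [π, Equiv.trans_apply, Equiv.sumCompl_symm_apply_of_neg hq]
        rfl
      rw [this]
      exact iff_of_false (e₂ ⟨q, hq⟩).2 hq
  have := reach_perm n hn (reach_Tk n hn k hk) π
  convert this using 1
  ext q
  rw [Set.mem_preimage]
  exact (hπ q).symm


lemma eval_replicate (k : ℕ) (q : Fin n) :
    (Udfa n (npos n hn)).evalFrom q (List.replicate k 0) =
      ⟨(q.val + k) % n, Nat.mod_lt _ (npos n hn)⟩ := by
  induction k generalizing q with
  | zero =>
    apply Fin.ext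
    show q.val = q.val % n
    rw [Nat.mod_eq_of_lt q.isLt]
  | succ k ih =>
    show (Udfa n (npos n hn)).evalFrom ((Udfa n (npos n hn)).step q 0) (List.replicate k 0) = _
    have hs : (Udfa n (npos n hn)).step q 0 = cyc n q := by
      show (if (0 : Fin 3) = 0 then cyc n q else
        if (0 : Fin 3) = 1 then tp01 n q else sing n q) = cyc n q
      rw [if_pos rfl]
    rw [hs, ih]
    apply Fin.ext
    show ((q.val + 1) % n + k) % n = (q.val + (k + 1)) % n
    rw [Nat.mod_add_mod]
    congr 1
    omega

lemma mem_rword_replicate (S : Set (Fin n)) (q : Fin n) :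
    z0 n hn ∈ rword n (npos n hn) S (List.replicate q.val 0) ↔ q ∈ S := by
  rw [rword_eq n hn]
  show (Udfa n (npos n hn)).evalFrom (z0 n hn) (List.replicate q.val 0).reverse ∈ S ↔ _
  rw [List.reverse_replicate, eval_replicate n hn]
  have : (⟨((z0 n hn).val + q.val) % n, Nat.mod_lt _ (npos n hn)⟩ : Fin n) = q := by
    apply Fin.ext
    show (0 + q.val) % n = q.val
    rw [Nat.zero_add, Nat.mod_eq_of_lt q.isLt]
  rw [this]

/-- lower bound: any DFA for the reversal has at least 2^n states -/
lemma lower_bound (m : ℕ) (M : DFA (Fin 3) (Fin m))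
    (hM : M.accepts = rev (U0 n (npos n hn))) : 2 ^ n ≤ m := by
  classical
  have hword : ∀ f : Fin n → Bool, ∃ w,
      rword n (npos n hn) (S0 n) w = {q | f q = true} :=
    fun f => reach_all n hn _
  choose wd hwd using hword
  have hinj : Function.Injective (fun f => M.eval (wd f)) := by
    intro f g hfg
    funext q
    have key : ∀ z, (wd f ++ z ∈ M.accepts ↔ wd g ++ z ∈ M.accepts) := by
      intro z
      show M.evalFrom M.start (wd f ++ z) ∈ M.accept ↔ M.evalFrom M.start (wd g ++ z) ∈ M.accept
      rw [DFA.evalFrom_of_append, DFA.evalFrom_of_append]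
      have : M.evalFrom M.start (wd f) = M.evalFrom M.start (wd g) := hfg
      rw [this]
    have key2 := key (List.replicate q.val 0)
    rw [hM] at key2
    rw [mem_rev n hn, mem_rev n hn, rword_append n hn, rword_append n hn, hwd, hwd,
      mem_rword_replicate n hn, mem_rword_replicate n hn] at key2
    simp only [Set.mem_setOf_eq] at key2
    by_cases hf : f q = true
    · rw [hf, (key2.mp hf)]
    · simp only [Bool.not_eq_true] at hf
      rw [hf]
      by_contra hg
      have : g q = true := by
        cases hgq : g q
        · exact absurd hgq.symm hg
        · rfl
      exact absurd (key2.mpr this) (by rw [hf]; simp)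
  calc 2 ^ n = Fintype.card (Fin n → Bool) := by simp
    _ ≤ Fintype.card (Fin m) := Fintype.card_le_of_injective _ hinj
    _ = m := Fintype.card_fin m

/-- the subset automaton for the reversal, over `Fin n → Bool` -/
def revDFA : DFA (Fin 3) (Fin n → Bool) where
  step := fun f x => fun q => f ((Udfa n (npos n hn)).step q x)
  start := fun q => decide (q.val = 0)
  accept := {f | f (z0 n hn) = true}

lemma revDFA_evalFrom (w : List (Fin 3)) (f : Fin n → Bool) (q : Fin n) :
    ((revDFA n hn).evalFrom f w) q = f ((Udfa n (npos n hn)).evalFrom q w.reverse) := by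
  induction w generalizing f with
  | nil => rfl
  | cons x w ih =>
    show ((revDFA n hn).evalFrom ((revDFA n hn).step f x) w) q = _
    rw [ih]
    show f ((Udfa n (npos n hn)).step ((Udfa n (npos n hn)).evalFrom q w.reverse) x) = _
    rw [List.reverse_cons, DFA.evalFrom_append_singleton]

lemma revDFA_accepts : (revDFA n hn).accepts = rev (U0 n (npos n hn)) := by
  ext w
  show ((revDFA n hn).evalFrom (revDFA n hn).start w) (z0 n hn) = true ↔ _
  rw [revDFA_evalFrom n hn]
  show decide (((Udfa n (npos n hn)).evalFrom (z0 n hn) w.reverse).val = 0) = true ↔ _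
  rw [decide_eq_true_iff]
  exact (mem_U0 n hn w.reverse).symm

lemma upper_bound : (2 : ℕ) ^ n ∈ complexitySet (rev (U0 n (npos n hn))) := by
  let e : (Fin n → Bool) ≃ Fin (2 ^ n) :=
    (Equiv.arrowCongr (Equiv.refl (Fin n)) finTwoEquiv.symm).trans finFunctionFinEquiv
  exact ⟨reindex (revDFA n hn) e, by rw [reindex_accepts, revDFA_accepts n hn]⟩

lemma sc_eq : sc (rev (U0 n (npos n hn))) = 2 ^ n := by
  apply le_antisymm
  · exact Nat.sInf_le (upper_bound n hn)
  · apply le_csInf ⟨_, upper_bound n hn⟩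
    intro m hm
    obtain ⟨M, hM⟩ := hm
    exact lower_bound n hn m M hM

end SCAux

theorem star_reversed_tight (n : ℕ) (hn : 3 ≤ n) :
    KStar.kstar (U0 n (by omega)) = U0 n (by omega) ∧
    rev (KStar.kstar (U0 n (by omega))) = rev (U0 n (by omega)) ∧
    sc (rev (KStar.kstar (U0 n (by omega)))) = 2 ^ n := by
  refine ⟨SCAux.kstar_U0 n hn, congrArg rev (SCAux.kstar_U0 n hn), ?_⟩
  show sc (rev (KStar.kstar (U0 n (SCAux.npos n hn)))) = 2 ^ n
  rw [SCAux.kstar_U0 n hn]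
  exact SCAux.sc_eq n hn
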